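/- arXiv:1805.12047 — 2 statements merged into one kernel-verified Lean document; each statement's English description precedes it below -/
import Mathlib

section
/- Let μ be a measure on ℝ non-degenerate in degree n+2ℓ for integers n, ℓ ≥ 0, and let x_1,…,x_n ∈ ℝ be distinct. If there exists a quadrature rule for μ of degree n+2ℓ with nodes x_1,…,x_n, r_{n+1},…,r_{n+ℓ} ∈ ℝ ∪ {∞}, then det( Σ_{k=0}^n (−1)^k e_k(x_1,…,x_n) M_ℓ^{(n−k)} ) = 0, where M_ℓ^{(k)} = (m_{i+j+k−2})_{1≤i,j≤ℓ+1} and e_k is the k-th elementary symmetric polynomial. -/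
open MeasureTheory Polynomial

/-- The k-th moment of a measure on ℝ. -/
noncomputable def mom (μ : Measure ℝ) (k : ℕ) : ℝ := ∫ t, t ^ k ∂μ

/-- Non-degeneracy in degree d: moments up to degree 2d exist and
∫ f dμ > 0 for every nonzero nonnegative polynomial of degree ≤ 2d. -/
def NonDeg (μ : Measure ℝ) (d : ℕ) : Prop :=
  (∀ k ≤ 2 * d, Integrable (fun t => t ^ k) μ) ∧
  ∀ f : Polynomial ℝ, f ≠ 0 → f.natDegree ≤ 2 * d → (∀ x, 0 ≤ f.eval x) →
    0 < ∫ t, f.eval t ∂μ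

/-- Evaluation of a polynomial at a node in ℝ ∪ {∞}: at `some a` it is `f(a)`;
at `none` (infinity) it is the coefficient of degree D. -/
noncomputable def ev (D : ℕ) (x : Option ℝ) (f : Polynomial ℝ) : ℝ :=
  x.elim (f.coeff D) (fun a => f.eval a)

/-- The d × d Hankel-type moment matrix with (i,j) entry m_{i+j+k} (0-based). -/
noncomputable def hank (μ : Measure ℝ) (d k : ℕ) : Matrix (Fin d) (Fin d) ℝ :=
  Matrix.of fun i j => mom μ ((i : ℕ) + (j : ℕ) + k)

/-- If μ is non-degenerate in degree n+2ℓ, x₁,…,x_n ∈ ℝ are distinct, and there is a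
quadrature rule for μ of degree n+2ℓ whose distinct nodes are x₁,…,x_n together with
ℓ further nodes in ℝ ∪ {∞}, then det(Σ_{k=0}^n (−1)^k e_k(x) M_ℓ^{(n−k)}) = 0, where
M_ℓ^{(m)} = (m_{i+j+m−2})_{1≤i,j≤ℓ+1} and e_k is the k-th elementary symmetric polynomial. -/
theorem stmt18 (μ : Measure ℝ) (n l : ℕ) (hnd : NonDeg μ (n + 2 * l))
    (x : Fin n → ℝ) (hx : Function.Injective x)
    (r : Fin l → Option ℝ) (hrinj : Function.Injective r)
    (hdist : ∀ i j, some (x i) ≠ r j)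
    (wx : Fin n → ℝ) (wr : Fin l → ℝ)
    (hwx : ∀ i, 0 < wx i) (hwr : ∀ j, 0 < wr j)
    (hq : ∀ f : Polynomial ℝ, f.natDegree ≤ n + 2 * l →
      ∫ t, f.eval t ∂μ
        = ∑ i, wx i * f.eval (x i) + ∑ j, wr j * ev (n + 2 * l) (r j) f) :
    (∑ k ∈ Finset.range (n + 1),
      ((-1 : ℝ) ^ k * ∑ S ∈ Finset.univ.powersetCard k, ∏ i ∈ S, x i) •
        hank μ (l + 1) (n - k)).det = 0 := by
  classical
  set c : ℕ → ℝ :=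
    fun k => (-1 : ℝ) ^ k * ∑ S ∈ Finset.univ.powersetCard k, ∏ i ∈ S, x i with hc
  set A : Matrix (Fin (l + 1)) (Fin (l + 1)) ℝ :=
    ∑ k ∈ Finset.range (n + 1), c k • hank μ (l + 1) (n - k) with hA
  -- the polynomial identity : ∑ c k * t^(n-k) = ∏ (t - x i)
  have hP : ∀ t : ℝ, ∑ k ∈ Finset.range (n + 1), c k * t ^ (n - k)
      = ∏ i, (t - x i) := by
    intro t
    have hcard : Multiset.card (Multiset.map x Finset.univ.val) = n := by simp
    have h := congrArg (Polynomial.eval t)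
      (Multiset.prod_X_sub_X_eq_sum_esymm (Multiset.map x Finset.univ.val))
    rw [hcard] at h
    have hl : Polynomial.eval t
        (Multiset.map (fun u => X - C u) (Multiset.map x Finset.univ.val)).prod
        = ∏ i, (t - x i) := by
      rw [Multiset.map_map, Finset.prod_eq_multiset_prod]
      rw [Polynomial.eval_multiset_prod, Multiset.map_map]
      simp [Function.comp]
    rw [hl] at h
    rw [h, Polynomial.eval_finset_sum]
    refine Finset.sum_congr rfl fun k hk => ?_
    simp only [Polynomial.eval_mul, Polynomial.eval_pow, Polynomial.eval_C,
      Polynomial.eval_X, Polynomial.eval_neg, Polynomial.eval_one]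
    rw [Finset.esymm_map_val]
    simp only [hc]
    ring
  have he0 : c 0 = 1 := by simp [hc]
  -- the evaluation function for extended nodes
  set g : Option ℝ → ℕ → ℝ :=
    fun o m => o.elim (if n + 2 * l = m then 1 else 0) (fun a => a ^ m) with hg
  -- moments via the quadrature rule
  have hmom : ∀ m ≤ n + 2 * l, mom μ m
      = ∑ p, wx p * x p ^ m + ∑ q, wr q * g (r q) m := by
    intro m hm
    have h := hq ((X : Polynomial ℝ) ^ m) (by simpa using hm)
    simpa [mom, ev, hg, Polynomial.coeff_X_pow] using h
  -- the factor matrices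
  set B : Matrix (Fin (l + 1)) (Fin l) ℝ :=
    Matrix.of fun i q =>
      wr q * (r q).elim (if (i : ℕ) = l then 1 else 0)
        (fun a => (∏ m, (a - x m)) * a ^ (i : ℕ)) with hB
  set Cc : Matrix (Fin l) (Fin (l + 1)) ℝ :=
    Matrix.of fun q j =>
      (r q).elim (if (j : ℕ) = l then 1 else 0) (fun a => a ^ (j : ℕ)) with hCc
  have hfact : A = B * Cc := by
    ext i j
    have hij : (i : ℕ) ≤ l := Nat.lt_succ_iff.mp i.2
    have hij' : (j : ℕ) ≤ l := Nat.lt_succ_iff.mp j.2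
    rw [Matrix.mul_apply]
    have hAij : A i j = ∑ k ∈ Finset.range (n + 1),
        c k * mom μ ((i : ℕ) + (j : ℕ) + (n - k)) := by
      rw [hA]
      rw [Matrix.sum_apply]
      refine Finset.sum_congr rfl fun k hk => ?_
      simp [hank, Matrix.smul_apply, smul_eq_mul]
    rw [hAij]
    have hrw : ∀ k ∈ Finset.range (n + 1),
        c k * mom μ ((i : ℕ) + (j : ℕ) + (n - k))
        = (∑ p, wx p * (c k * x p ^ ((i : ℕ) + (j : ℕ) + (n - k))))
          + ∑ q, wr q * (c k * g (r q) ((i : ℕ) + (j : ℕ) + (n - k))) := by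
      intro k hk
      rw [hmom _ (by simp at hk; omega)]
      rw [mul_add, Finset.mul_sum, Finset.mul_sum]
      congr 1 <;> exact Finset.sum_congr rfl fun p _ => by ring
    rw [Finset.sum_congr rfl hrw, Finset.sum_add_distrib]
    -- the x-part vanishes
    have hx0 : ∑ k ∈ Finset.range (n + 1),
        ∑ p, wx p * (c k * x p ^ ((i : ℕ) + (j : ℕ) + (n - k))) = 0 := by
      rw [Finset.sum_comm]
      refine Finset.sum_eq_zero fun p _ => ?_
      have : ∑ k ∈ Finset.range (n + 1),
          wx p * (c k * x p ^ ((i : ℕ) + (j : ℕ) + (n - k)))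
          = wx p * x p ^ ((i : ℕ) + (j : ℕ)) *
            ∑ k ∈ Finset.range (n + 1), c k * x p ^ (n - k) := by
        rw [Finset.mul_sum]
        refine Finset.sum_congr rfl fun k hk => ?_
        rw [pow_add]
        ring
      rw [this, hP (x p), Finset.prod_eq_zero (Finset.mem_univ p) (sub_self (x p))]
      ring
    rw [hx0, zero_add, Finset.sum_comm]
    refine Finset.sum_congr rfl fun q _ => ?_
    rw [hB, hCc]
    cases hrq : r q with
    | some a =>
      simp only [Option.elim, Matrix.of_apply, hrq]
      have : ∑ k ∈ Finset.range (n + 1),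
          wr q * (c k * g (some a) ((i : ℕ) + (j : ℕ) + (n - k)))
          = wr q * a ^ ((i : ℕ) + (j : ℕ)) *
            ∑ k ∈ Finset.range (n + 1), c k * a ^ (n - k) := by
        rw [Finset.mul_sum]
        refine Finset.sum_congr rfl fun k hk => ?_
        simp only [hg, Option.elim]
        rw [pow_add]
        ring
      rw [this, hP a, pow_add]
      ring
    | none =>
      simp only [Option.elim, Matrix.of_apply, hrq]
      have hsum : ∑ k ∈ Finset.range (n + 1),
          wr q * (c k * g none ((i : ℕ) + (j : ℕ) + (n - k)))
          = ∑ k ∈ Finset.range (n + 1),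
            (if k = 0 then wr q * (if (i : ℕ) = l then 1 else 0)
              * (if (j : ℕ) = l then 1 else 0) else 0) := by
        refine Finset.sum_congr rfl fun k hk => ?_
        simp only [hg, Option.elim]
        simp only [Finset.mem_range] at hk
        by_cases h0 : n + 2 * l = (i : ℕ) + (j : ℕ) + (n - k)
        · have hk0 : k = 0 := by omega
          have hil : (i : ℕ) = l := by omega
          have hjl : (j : ℕ) = l := by omega
          rw [if_pos h0, hk0, he0, if_pos rfl, if_pos hil, if_pos hjl]
          ring
        · rw [if_neg h0]
          by_cases hk0 : k = 0
          · have : ¬((i : ℕ) = l ∧ (j : ℕ) = l) := fun ⟨h1, h2⟩ => h0 (by omega)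
            rw [if_pos hk0]
            rcases Decidable.not_and_iff_or_not.mp this with h | h <;>
              simp [h]
          · rw [if_neg hk0]; ring
      rw [hsum, Finset.sum_ite_eq' (Finset.range (n + 1)) 0]
      simp
  -- Cc has a nontrivial kernel
  have hker : ∃ v : Fin (l + 1) → ℝ, v ≠ 0 ∧ Cc.mulVec v = 0 := by
    have hlt : Module.finrank ℝ (Fin l → ℝ) < Module.finrank ℝ (Fin (l + 1) → ℝ) := by
      rw [Module.finrank_fin_fun, Module.finrank_fin_fun]; omega
    have := LinearMap.ker_ne_bot_of_finrank_lt (f := Cc.mulVecLin) hlt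
    rcases Submodule.ne_bot_iff _ |>.mp this with ⟨v, hv, hv0⟩
    exact ⟨v, hv0, hv⟩
  rcases hker with ⟨v, hv0, hv⟩
  refine Matrix.exists_mulVec_eq_zero_iff.mp ⟨v, hv0, ?_⟩
  rw [hfact, ← Matrix.mulVec_mulVec, hv, Matrix.mulVec_zero]
end

section
/- Let μ be non-degenerate in degree d ≥ 1, fix y ∈ ℝ, and suppose y is strictly larger than all roots of det(λM_{d−1} − M'_{d−1}). Then the matrix yM_{d−1} − M'_{d−1} is positive definite, and the solutions x of F(x,y) = 0 coincide with the generalized eigenvalues of the pair (yM'_{d−1} − M''_{d−1}, yM_{d−1} − M'_{d−1}), i.e., {x ∈ ℝ : F(x,y) = 0} = {x : det(x(yM_{d−1} − M'_{d−1}) − (yM'_{d−1} − M''_{d−1})) = 0}. -/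
open MeasureTheory Polynomial Matrix
set_option maxHeartbeats 1000000

section aux
variable {n : Type*} [Fintype n] [DecidableEq n]

lemma aux_posDef_of_det {C : Matrix n n ℝ} (h : C.PosSemidef) (hdet : C.det ≠ 0) :
    C.PosDef := by
  have h' := posSemidef_iff_dotProduct_mulVec.mp h
  refine posDef_iff_dotProduct_mulVec.mpr ⟨h.1, fun x hx => ?_⟩
  rcases lt_or_eq_of_le (h'.2 x) with hlt | heq
  · exact hlt
  · exfalso
    have h0 : C *ᵥ x = 0 := (h.dotProduct_mulVec_zero_iff x).mp heq.symm
    have hinj := mulVec_injective_iff_isUnit.mpr ((Matrix.isUnit_iff_isUnit_det _).2 hdet.isUnit)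
    exact hx (hinj (by simpa using h0))

lemma aux_posDef_conj {C S : Matrix n n ℝ} (hC : C.PosDef) (hSh : S.IsHermitian)
    (hS : S.det ≠ 0) : (S * C * S).PosDef := by
  have hinj := mulVec_injective_iff_isUnit.mpr ((Matrix.isUnit_iff_isUnit_det _).2 hS.isUnit)
  rw [posDef_iff_dotProduct_mulVec] at hC
  have key : (Sᴴ * C * S).PosDef := by
    refine posDef_iff_dotProduct_mulVec.mpr ⟨isHermitian_conjTranspose_mul_mul S hC.1, fun x hx => ?_⟩
    have hx' : S *ᵥ x ≠ 0 := fun h0 => hx (hinj (by simpa using h0))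
    simpa only [star_mulVec, dotProduct_mulVec, vecMul_vecMul] using hC.2 (x := S *ᵥ x) hx'
  rwa [hSh.eq] at key

open scoped MatrixOrder in
lemma aux_sqrt {M : Matrix n n ℝ} (hM : M.PosSemidef) : ∃ S : Matrix n n ℝ,
    S.IsHermitian ∧ S * S = M :=
  ⟨CFC.sqrt M, (CFC.sqrt_nonneg M).posSemidef.1, CFC.sqrt_mul_sqrt_self M hM.nonneg⟩

end aux

lemma hank_posDef (μ : Measure ℝ) (d : ℕ) (hd : 1 ≤ d) (hnd : NonDeg μ d) :
    (hank μ d 0).PosDef := by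
  classical
  refine posDef_iff_dotProduct_mulVec.mpr ⟨?_, fun v hv => ?_⟩
  · ext i j
    simp [hank, Matrix.conjTranspose, add_comm]
  · set p : Polynomial ℝ := ∑ i : Fin d, C (v i) * X ^ (i : ℕ) with hp
    have hcoeff : ∀ i : Fin d, p.coeff (i : ℕ) = v i := by
      intro i
      rw [hp, Polynomial.finset_sum_coeff]
      rw [Finset.sum_eq_single i]
      · simp
      · intro j _ hji
        simp only [Polynomial.coeff_C_mul, Polynomial.coeff_X_pow]
        rw [if_neg (fun h => hji (Fin.ext h).symm)]
        ring
      · simp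
    have hpne : p ≠ 0 := by
      obtain ⟨i, hi⟩ := Function.ne_iff.mp hv
      intro h
      exact hi (by rw [← hcoeff i, h]; simp)
    have hdegp : p.natDegree ≤ d - 1 := by
      apply Polynomial.natDegree_sum_le_of_forall_le
      intro i _
      refine (Polynomial.natDegree_C_mul_le _ _).trans ?_
      simp only [Polynomial.natDegree_X_pow]
      omega
    have hf : (p * p).natDegree ≤ 2 * d := by
      refine (Polynomial.natDegree_mul_le).trans ?_
      omega
    have hint : 0 < ∫ t, (p * p).eval t ∂μ := by
      refine hnd.2 (p * p) (mul_ne_zero hpne hpne) hf ?_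
      intro x
      simp only [Polynomial.eval_mul]
      exact mul_self_nonneg _
    -- rewrite the integral as the quadratic form
    have hpe : ∀ t : ℝ, (p * p).eval t = ∑ i : Fin d, ∑ j : Fin d,
        v i * v j * t ^ ((i : ℕ) + (j : ℕ)) := by
      intro t
      rw [Polynomial.eval_mul, hp]
      simp only [Polynomial.eval_finset_sum, Polynomial.eval_mul, Polynomial.eval_C,
        Polynomial.eval_pow, Polynomial.eval_X]
      rw [Finset.sum_mul_sum]
      congr 1; ext i; congr 1; ext j; ring
    have hintg : ∀ (i j : Fin d), Integrable (fun t => v i * v j * t ^ ((i:ℕ) + (j:ℕ))) μ := by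
      intro i j
      exact (hnd.1 ((i:ℕ)+(j:ℕ)) (by omega)).const_mul _
    have hins : ∫ t, (p * p).eval t ∂μ = ∑ i : Fin d, ∑ j : Fin d,
        v i * v j * mom μ ((i:ℕ) + (j:ℕ)) := by
      simp_rw [hpe]
      rw [integral_finset_sum _ (fun i _ => integrable_finset_sum _ (fun j _ => hintg i j))]
      refine Finset.sum_congr rfl fun i _ => ?_
      rw [integral_finset_sum _ (fun j _ => hintg i j)]
      refine Finset.sum_congr rfl fun j _ => ?_
      rw [integral_const_mul]
      rfl
    have hform : star v ⬝ᵥ (hank μ d 0) *ᵥ v = ∑ i : Fin d, ∑ j : Fin d,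
        v i * v j * mom μ ((i:ℕ) + (j:ℕ)) := by
      simp only [dotProduct, Matrix.mulVec, hank, Matrix.of_apply, Pi.star_apply,
        star_trivial, Finset.mul_sum]
      refine Finset.sum_congr rfl fun i _ => Finset.sum_congr rfl fun j _ => ?_
      rw [Nat.add_zero]; ring
    rw [hform, ← hins]
    exact hint

/-- If μ is non-degenerate in degree d ≥ 1 and y is strictly larger than every root of
det(λ M_{d-1} - M'_{d-1}), then y M_{d-1} - M'_{d-1} is positive definite and the solutions
of F(x,y) = 0 are exactly the generalized eigenvalues:
det(x(y M_{d-1} - M'_{d-1}) - (y M'_{d-1} - M''_{d-1})) = 0. -/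
theorem stmt19 (μ : Measure ℝ) (d : ℕ) (hd : 1 ≤ d) (hnd : NonDeg μ d) (y : ℝ)
    (hy : ∀ l : ℝ, (l • hank μ d 0 - hank μ d 1).det = 0 → l < y) :
    (y • hank μ d 0 - hank μ d 1).PosDef ∧
    ∀ x : ℝ,
      ((x * y) • hank μ d 0 - (x + y) • hank μ d 1 + hank μ d 2).det = 0 ↔
      (x • (y • hank μ d 0 - hank μ d 1) - (y • hank μ d 1 - hank μ d 2)).det = 0 := by
  classical
  constructor
  · -- positive definiteness
    have hM : (hank μ d 0).PosDef := hank_posDef μ d hd hnd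
    set M : Matrix (Fin d) (Fin d) ℝ := hank μ d 0 with hMdef
    set M1 : Matrix (Fin d) (Fin d) ℝ := hank μ d 1 with hM1def
    have hM1h : M1.IsHermitian := by
      ext i j
      simp [hM1def, hank, Matrix.conjTranspose, add_comm, add_assoc, add_left_comm]
    obtain ⟨S, hSh, hSS⟩ := aux_sqrt hM.posSemidef
    have hSdet : S.det ≠ 0 := by
      intro h0
      have : M.det = 0 := by rw [← hSS, Matrix.det_mul, h0, mul_zero]
      exact hM.det_pos.ne' this
    have hSunit : IsUnit S.det := hSdet.isUnit
    set B : Matrix (Fin d) (Fin d) ℝ := S⁻¹ * M1 * S⁻¹ with hBdef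
    have hBh : B.IsHermitian := by
      have h1 : (S⁻¹).IsHermitian := hSh.inv
      show Bᴴ = B
      rw [hBdef, Matrix.conjTranspose_mul, Matrix.conjTranspose_mul, h1.eq, hM1h.eq,
        Matrix.mul_assoc]
    have hkey : ∀ l : ℝ, l • M - M1 = S * (l • (1 : Matrix (Fin d) (Fin d) ℝ) - B) * S := by
      intro l
      have h1 : S * (l • (1 : Matrix (Fin d) (Fin d) ℝ)) * S = l • M := by
        rw [Matrix.mul_smul, Matrix.mul_one, Matrix.smul_mul, hSS]
      have h2 : S * B * S = M1 := by
        rw [hBdef]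
        simp only [Matrix.mul_assoc]
        rw [Matrix.nonsing_inv_mul S hSunit, Matrix.mul_one, ← Matrix.mul_assoc,
          Matrix.mul_nonsing_inv S hSunit, Matrix.one_mul]
      rw [Matrix.mul_sub, Matrix.sub_mul, h1, h2]
    set C : Matrix (Fin d) (Fin d) ℝ := y • (1 : Matrix (Fin d) (Fin d) ℝ) - B with hCdef
    have hCh : C.IsHermitian := by
      show Cᴴ = C
      rw [hCdef, Matrix.conjTranspose_sub, Matrix.conjTranspose_smul, Matrix.conjTranspose_one,
        hBh.eq]
      simp
    have heig : ∀ i, 0 < hCh.eigenvalues i := by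
      intro i
      have hmem : (hCh.eigenvalues i : ℝ) ∈ spectrum ℝ C := hCh.eigenvalues_mem_spectrum_real i
      rw [spectrum.mem_iff] at hmem
      have hdet0 : ((hCh.eigenvalues i : ℝ) • (1 : Matrix (Fin d) (Fin d) ℝ) - C).det = 0 := by
        by_contra h
        exact hmem (by
          rw [Algebra.algebraMap_eq_smul_one]
          exact (Matrix.isUnit_iff_isUnit_det _).2 (Ne.isUnit h))
      have hrw' : ∀ t : ℝ, t • (1 : Matrix (Fin d) (Fin d) ℝ) - C
          = -((y - t) • (1 : Matrix (Fin d) (Fin d) ℝ) - B) := by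
        intro t; rw [hCdef]; module
      have hrw := hrw' (hCh.eigenvalues i)
      have hdet1 : ((y - hCh.eigenvalues i) • (1 : Matrix (Fin d) (Fin d) ℝ) - B).det = 0 := by
        rw [hrw, Matrix.det_neg] at hdet0
        rcases mul_eq_zero.mp hdet0 with h | h
        · exact absurd h (by positivity)
        · exact h
      have hlt : y - hCh.eigenvalues i < y := by
        refine hy _ ?_
        rw [hkey, Matrix.det_mul, Matrix.det_mul, hdet1, mul_zero, zero_mul]
      linarith
    have hCps : C.PosSemidef := hCh.posSemidef_iff_eigenvalues_nonneg.mpr fun i => (heig i).le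
    have hCdet : C.det ≠ 0 := by
      rw [hCh.det_eq_prod_eigenvalues]
      exact ne_of_gt (Finset.prod_pos fun i _ => heig i)
    have hCpd : C.PosDef := aux_posDef_of_det hCps hCdet
    have := aux_posDef_conj hCpd hSh hSdet
    rwa [← hkey y] at this
  · intro x
    have heq : (x * y) • hank μ d 0 - (x + y) • hank μ d 1 + hank μ d 2 =
        x • (y • hank μ d 0 - hank μ d 1) - (y • hank μ d 1 - hank μ d 2) := by
      ext i j
      simp only [Matrix.sub_apply, Matrix.add_apply, Matrix.smul_apply, smul_eq_mul]
      ring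
    rw [heq]
end
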